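/- Let h, d ∈ H^∞ of the unit disc with d not identically zero, and let φ be an inner function such that for every n ∈ ℕ the function φ^n divides h^n d in H^∞ (i.e., h^n d / φ^n ∈ H^∞). Then φ divides h in H^∞. -/

import Mathlib

open Complex Filter Metric
open scoped Topology

/-- `f` is a bounded analytic function on the open unit disc. -/
def IsHinf (f : ℂ → ℂ) : Prop :=
  DifferentiableOn ℂ f (ball (0 : ℂ) 1) ∧ ∃ C : ℝ, ∀ z ∈ ball (0 : ℂ) 1, ‖f z‖ ≤ C

/-- `φ` is an inner function: bounded analytic on the disc with unimodular radial boundary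
values a.e. -/
def IsInnerFn (φ : ℂ → ℂ) : Prop :=
  IsHinf φ ∧ ∀ᵐ θ : ℝ,
    Tendsto (fun r : ℝ => ‖φ ((r : ℂ) * Complex.exp ((θ : ℂ) * Complex.I))‖)
      (𝓝[<] (1 : ℝ)) (𝓝 1)


open MeasureTheory intervalIntegral Set
open scoped Real

section PoissonAux

lemma kernel_eq (w z : ℂ) (r : ℝ) (hw0 : w ≠ 0) (hw1 : w * (starRingEnd ℂ) w = (r:ℂ)^2)
    (hwz : w - z ≠ 0) :
    (w * I) * (w - z)⁻¹ + (w * I) * ((starRingEnd ℂ) z / ((r:ℂ)^2 - (starRingEnd ℂ) z * w))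
      = I * (((r^2 - Complex.normSq z) / Complex.normSq (w - z) : ℝ) : ℂ) := by
  have hc : ((Complex.normSq (w - z) : ℝ) : ℂ) = (w - z) * (starRingEnd ℂ) (w - z) :=
    (Complex.mul_conj _).symm
  have hz : ((Complex.normSq z : ℝ) : ℂ) = z * (starRingEnd ℂ) z := (Complex.mul_conj _).symm
  have hcz : (starRingEnd ℂ) (w - z) ≠ 0 := by
    simpa using (map_ne_zero (starRingEnd ℂ)).mpr hwz
  push_cast
  rw [hc, hz, ← hw1, map_sub] at *
  generalize (starRingEnd ℂ) w = W at *
  generalize (starRingEnd ℂ) z = Z at *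
  have h2 : W - Z ≠ 0 := hcz
  have h3 : w * W - Z * w ≠ 0 := by
    intro hE
    exact mul_ne_zero hw0 h2 (by linear_combination hE)
  field_simp [h3]
  ring

lemma poisson_formula (F : ℂ → ℂ) (r : ℝ) (hr : 0 < r) (hF : DiffContOnCl ℂ F (ball 0 r))
    (z : ℂ) (hz : z ∈ ball (0:ℂ) r) :
    (∫ t in (0:ℝ)..(2*π),
      ((r^2 - Complex.normSq z) / Complex.normSq (circleMap 0 r t - z) : ℝ) • F (circleMap 0 r t))
      = (2*π : ℝ) • F z := by
  have hzr : ‖z‖ < r := by simpa using hz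
  have h1 : (∮ w in C(0, r), (w - z)⁻¹ • F w) = (2 * ↑π * I) • F z :=
    hF.circleIntegral_sub_inv_smul hz
  have hcl : closure (ball (0:ℂ) r) = closedBall 0 r := closure_ball 0 hr.ne'
  have hden : ∀ w ∈ closedBall (0:ℂ) r, ((r:ℂ)^2 - (starRingEnd ℂ) z * w) ≠ 0 := by
    intro w hw h0
    have hwr : ‖w‖ ≤ r := by simpa using hw
    have he : (r:ℂ)^2 = (starRingEnd ℂ) z * w := sub_eq_zero.mp h0
    have hn := congrArg norm he
    simp only [norm_mul, norm_pow, Complex.norm_real, RCLike.norm_conj, Real.norm_eq_abs,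
      abs_of_pos hr] at hn
    nlinarith [norm_nonneg z, norm_nonneg w]
  have hFc : ContinuousOn F (closedBall (0:ℂ) r) := hcl ▸ hF.continuousOn
  have h2 : (∮ w in C(0, r), ((starRingEnd ℂ) z / ((r:ℂ)^2 - (starRingEnd ℂ) z * w)) • F w) = 0 := by
    refine circleIntegral_eq_zero_of_differentiable_on_off_countable hr.le Set.countable_empty
      ?_ ?_
    · exact (continuousOn_const.div (continuousOn_const.sub (continuousOn_const.mul
        (continuousOn_id))) hden).smul hFc
    · intro w hw
      have hwb : w ∈ ball (0:ℂ) r := hw.1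
      have hFd : DifferentiableAt ℂ F w := hF.differentiableOn.differentiableAt
        (isOpen_ball.mem_nhds hwb)
      exact ((differentiableAt_const _).div ((differentiableAt_const _).sub
        ((differentiableAt_const _).mul (differentiableAt_id (x := w))))
        (hden w (ball_subset_closedBall hwb))).smul hFd
  -- basic facts about the circle map
  have hcm : ∀ t : ℝ, circleMap 0 r t ∈ closedBall (0:ℂ) r := fun t =>
    sphere_subset_closedBall (circleMap_mem_sphere 0 hr.le t)
  have hFcc : Continuous fun t : ℝ => F (circleMap 0 r t) :=
    hFc.comp_continuous (continuous_circleMap 0 r) hcm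
  have hne : ∀ t : ℝ, circleMap 0 r t - z ≠ 0 := fun t =>
    sub_ne_zero.mpr (circleMap_ne_mem_ball hz t)
  have hw0 : ∀ t : ℝ, circleMap 0 r t ≠ 0 := fun t => by
    intro h0
    have := norm_circleMap_zero r t
    rw [h0] at this
    simp only [norm_zero] at this
    rw [abs_of_pos hr] at this
    exact hr.ne (by linarith)
  have hw1 : ∀ t : ℝ, circleMap 0 r t * (starRingEnd ℂ) (circleMap 0 r t) = (r:ℂ)^2 := by
    intro t
    rw [Complex.mul_conj]
    norm_cast
    rw [Complex.normSq_eq_norm_sq, norm_circleMap_zero, abs_of_pos hr]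
  -- unfold circle integrals
  simp only [circleIntegral, deriv_circleMap] at h1 h2
  have I1 : IntervalIntegrable
      (fun t : ℝ => (circleMap 0 r t * I) • (circleMap 0 r t - z)⁻¹ • F (circleMap 0 r t))
      volume 0 (2*π) := by
    apply Continuous.intervalIntegrable
    exact ((continuous_circleMap 0 r).mul continuous_const).smul
      ((((continuous_circleMap 0 r).sub continuous_const).inv₀ hne).smul hFcc)
  have I2 : IntervalIntegrable
      (fun t : ℝ => (circleMap 0 r t * I) •
        ((starRingEnd ℂ) z / ((r:ℂ)^2 - (starRingEnd ℂ) z * circleMap 0 r t)) • F (circleMap 0 r t))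
      volume 0 (2*π) := by
    apply Continuous.intervalIntegrable
    exact ((continuous_circleMap 0 r).mul continuous_const).smul
      ((continuous_const.div (continuous_const.sub
        (continuous_const.mul (continuous_circleMap 0 r)))
        (fun t => hden _ (hcm t))).smul hFcc)
  have hsum := intervalIntegral.integral_add I1 I2
  rw [h1, h2, add_zero] at hsum
  -- rewrite the integrand
  have hpt : ∀ t : ℝ,
      (circleMap 0 r t * I) • (circleMap 0 r t - z)⁻¹ • F (circleMap 0 r t)
      + (circleMap 0 r t * I) •
        ((starRingEnd ℂ) z / ((r:ℂ)^2 - (starRingEnd ℂ) z * circleMap 0 r t)) • F (circleMap 0 r t)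
      = I * (((r^2 - Complex.normSq z) / Complex.normSq (circleMap 0 r t - z) : ℝ) •
          F (circleMap 0 r t)) := by
    intro t
    have hk := kernel_eq (circleMap 0 r t) z r (hw0 t) (hw1 t) (hne t)
    rw [Complex.real_smul]
    simp only [smul_eq_mul]
    rw [← mul_assoc, ← mul_assoc, ← add_mul, hk]
    ring
  rw [intervalIntegral.integral_congr (fun t _ => hpt t)] at hsum
  rw [intervalIntegral.integral_const_mul] at hsum
  apply mul_left_cancel₀ Complex.I_ne_zero
  rw [hsum, Complex.real_smul, smul_eq_mul]
  push_cast
  ring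

lemma poisson_one (z : ℂ) (hz : z ∈ ball (0:ℂ) 1) :
    ∫ t in (0:ℝ)..(2*π), ((1 - Complex.normSq z) / Complex.normSq (circleMap 0 1 t - z) : ℝ)
      = 2*π := by
  have h := poisson_formula (fun _ => 1) 1 one_pos
    (DifferentiableOn.diffContOnCl (differentiableOn_const 1)) z hz
  simp only [one_pow, smul_eq_mul, mul_one] at h
  have h2 : (∫ t in (0:ℝ)..(2*π),
      (((1 - Complex.normSq z) / Complex.normSq (circleMap 0 1 t - z) : ℝ) : ℂ))
      = ((2*π : ℝ) : ℂ) := by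
    simpa [Complex.real_smul] using h
  rw [intervalIntegral.integral_ofReal] at h2
  exact_mod_cast h2

lemma poisson_bound (F : ℂ → ℂ) (hF : DifferentiableOn ℂ F (ball 0 1)) (C : ℝ)
    (hC : ∀ z ∈ ball (0:ℂ) 1, ‖F z‖ ≤ C) (A : ℝ) (hA : 0 ≤ A)
    (hb : ∀ᵐ θ : ℝ, ∀ ε > (0:ℝ), ∀ᶠ r : ℝ in 𝓝[<] (1:ℝ),
      ‖F ((r:ℂ) * Complex.exp ((θ:ℂ) * I))‖ ≤ A + ε) :
    ∀ z ∈ ball (0:ℂ) 1, ‖F z‖ ≤ A := by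
  intro z hz
  have hρ1 : ‖z‖ < 1 := by simpa using hz
  have hρ0 : 0 ≤ ‖z‖ := norm_nonneg z
  set ρ : ℝ := ‖z‖ with hρdef
  set c : ℝ := (1 - ρ)/2 with hcdef
  have hc0 : 0 < c := by simp only [hcdef]; linarith
  set r : ℕ → ℝ := fun k => 1 - c/(k+1) with hrdef
  have hrlt : ∀ k, r k < 1 := by
    intro k
    have : 0 < c/(k+1) := div_pos hc0 (by positivity)
    simp only [hrdef]; linarith
  have hrge : ∀ k, (1+ρ)/2 ≤ r k := by
    intro k
    have h1 : c/((k:ℝ)+1) ≤ c := by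
      apply div_le_self hc0.le
      have : (0:ℝ) ≤ (k:ℝ) := Nat.cast_nonneg k
      linarith
    simp only [hrdef, hcdef]; simp only [hcdef] at h1; linarith
  have hρr : ∀ k, ρ < r k := fun k => lt_of_lt_of_le (by linarith) (hrge k)
  have hr0 : ∀ k, 0 < r k := fun k => lt_of_le_of_lt hρ0 (hρr k)
  have hrt1 : Tendsto r atTop (𝓝 1) := by
    have h0 : Tendsto (fun k : ℕ => c/((k:ℝ)+1)) atTop (𝓝 0) := by
      have := tendsto_one_div_add_atTop_nhds_zero_nat.const_mul c
      simpa [div_eq_mul_inv, mul_comm] using this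
    have := tendsto_const_nhds.sub h0 (f := fun _ : ℕ => (1:ℝ))
    simpa using this
  have hrt : Tendsto r atTop (𝓝[<] (1:ℝ)) :=
    tendsto_nhdsWithin_of_tendsto_nhds_of_eventually_within r hrt1
      (Eventually.of_forall fun k => hrlt k)
  -- Poisson kernels
  set P : ℕ → ℝ → ℝ := fun k t => (r k^2 - Complex.normSq z) / Complex.normSq (circleMap 0 (r k) t - z) with hPdef
  set Q : ℝ → ℝ := fun t => (1 - Complex.normSq z) / Complex.normSq (circleMap 0 1 t - z) with hQdef
  have hnsz : Complex.normSq z = ρ^2 := by rw [Complex.normSq_eq_norm_sq]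
  have hQne : ∀ t : ℝ, circleMap 0 1 t ≠ z := by
    intro t hE
    have : ρ = 1 := by
      rw [hρdef, ← hE, norm_circleMap_zero]; norm_num
    exact hρ1.ne this
  have hPne : ∀ k, ∀ t : ℝ, circleMap 0 (r k) t ≠ z := fun k t =>
    circleMap_ne_mem_ball (mem_ball_zero_iff.mpr (hρr k)) t
  have hQd0 : ∀ t : ℝ, Complex.normSq (circleMap 0 1 t - z) ≠ 0 := fun t =>
    (Complex.normSq_pos.mpr (sub_ne_zero.mpr (hQne t))).ne'
  have hPd0 : ∀ k, ∀ t : ℝ, Complex.normSq (circleMap 0 (r k) t - z) ≠ 0 := fun k t =>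
    (Complex.normSq_pos.mpr (sub_ne_zero.mpr (hPne k t))).ne'
  have hQcont : Continuous Q := continuous_const.div
    (Complex.continuous_normSq.comp ((continuous_circleMap 0 1).sub continuous_const)) hQd0
  have hPcont : ∀ k, Continuous (P k) := fun k => continuous_const.div
    (Complex.continuous_normSq.comp ((continuous_circleMap 0 (r k)).sub continuous_const)) (hPd0 k)
  have hQ0 : ∀ t, 0 ≤ Q t := fun t => div_nonneg (by nlinarith) (Complex.normSq_nonneg _)
  have hP0 : ∀ k t, 0 ≤ P k t := fun k t => div_nonneg
    (by have := hρr k; nlinarith) (Complex.normSq_nonneg _)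
  -- membership facts
  have hmem : ∀ k t, circleMap 0 (r k) t ∈ ball (0:ℂ) 1 := by
    intro k t
    rw [mem_ball_zero_iff, norm_circleMap_zero, abs_of_pos (hr0 k)]
    exact hrlt k
  have hFcc : ∀ k, Continuous (fun t => F (circleMap 0 (r k) t)) := fun k =>
    hF.continuousOn.comp_continuous (continuous_circleMap 0 (r k)) (hmem k)
  -- the Poisson identity and basic estimate
  have key1 : ∀ k, 2*π*‖F z‖ ≤ ∫ t in (0:ℝ)..(2*π), P k t * ‖F (circleMap 0 (r k) t)‖ := by
    intro k
    have hsub : closure (ball (0:ℂ) (r k)) ⊆ ball 0 1 := by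
      rw [closure_ball (0:ℂ) (hr0 k).ne']
      exact closedBall_subset_ball (hrlt k)
    have hid := poisson_formula F (r k) (hr0 k) (hF.mono hsub).diffContOnCl z
      (mem_ball_zero_iff.mpr (hρr k))
    have e1 : 2*π*‖F z‖ = ‖∫ t in (0:ℝ)..(2*π), P k t • F (circleMap 0 (r k) t)‖ := by
      rw [hid, norm_smul, Real.norm_eq_abs, abs_of_pos Real.two_pi_pos]
    rw [e1]
    refine le_trans (intervalIntegral.norm_integral_le_integral_norm Real.two_pi_pos.le) ?_
    apply le_of_eq
    apply intervalIntegral.integral_congr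
    intro t _
    simp only [norm_smul, Real.norm_eq_abs]
    rw [_root_.abs_of_nonneg (hP0 k t)]
  -- move to the Lebesgue integral
  set μ : Measure ℝ := volume.restrict (Ioc (0:ℝ) (2*π)) with hμdef
  set G : ℕ → ℝ → ℝ := fun k t => P k t * ‖F (circleMap 0 (r k) t)‖ with hGdef
  have hGcont : ∀ k, Continuous (G k) := fun k => (hPcont k).mul (hFcc k).norm
  have hGint : ∀ k, Integrable (G k) μ := fun k => (hGcont k).integrableOn_Ioc
  have hG0 : ∀ k t, 0 ≤ G k t := fun k t => mul_nonneg (hP0 k t) (norm_nonneg _)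
  have key2 : ∀ k, ENNReal.ofReal (2*π*‖F z‖) ≤ ∫⁻ t, ENNReal.ofReal (G k t) ∂μ := by
    intro k
    rw [← ofReal_integral_eq_lintegral_ofReal (hGint k) (Eventually.of_forall (hG0 k))]
    apply ENNReal.ofReal_le_ofReal
    have : ∫ t, G k t ∂μ = ∫ t in (0:ℝ)..(2*π), G k t := (integral_of_le Real.two_pi_pos.le).symm
    rw [this]
    exact key1 k
  -- uniform bound for reverse Fatou
  have hCm : ∀ w ∈ ball (0:ℂ) 1, ‖F w‖ ≤ max C 0 := fun w hw => le_trans (hC w hw) (le_max_left _ _)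
  have hPB : ∀ k t, P k t ≤ 1/c^2 := by
    intro k t
    have hns : Complex.normSq (circleMap 0 (r k) t - z) = ‖circleMap 0 (r k) t - z‖^2 := by
      rw [Complex.normSq_eq_norm_sq]
    have hlb : c ≤ ‖circleMap 0 (r k) t - z‖ := by
      have h1 : ‖circleMap 0 (r k) t‖ - ‖z‖ ≤ ‖circleMap 0 (r k) t - z‖ :=
        norm_sub_norm_le _ _
      have h2 : ‖circleMap 0 (r k) t‖ = r k := by
        rw [norm_circleMap_zero, abs_of_pos (hr0 k)]
      have h3 := hrge k
      simp only [hcdef]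
      rw [h2, ← hρdef] at h1
      have h5 : (1+ρ)/2 - ρ ≤ r k - ρ := sub_le_sub_right h3 ρ
      have h6 : (1-ρ)/2 = (1+ρ)/2 - ρ := by ring
      exact le_trans (le_of_eq h6) (le_trans h5 h1)
    have hnum : r k^2 - Complex.normSq z ≤ 1 := by
      have := (hrlt k).le
      have := hr0 k
      nlinarith [Complex.normSq_nonneg z]
    rw [hPdef]
    simp only
    have h5 : 0 < ‖circleMap 0 (r k) t - z‖ := norm_pos_iff.mpr (sub_ne_zero.mpr (hPne k t))
    rw [hns, div_le_div_iff₀ (pow_pos h5 2) (by positivity)]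
    nlinarith [hlb, hc0, hnum]
  set B : ENNReal := ENNReal.ofReal ((1/c^2) * max C 0) with hBdef
  have hGB : ∀ k t, G k t ≤ (1/c^2) * max C 0 := by
    intro k t
    exact mul_le_mul (hPB k t) (hCm _ (hmem k t)) (norm_nonneg _) (by positivity)
  have hmeas : ∀ k, Measurable (fun t => ENNReal.ofReal (G k t)) := fun k =>
    (hGcont k).measurable.ennreal_ofReal
  have hfinB : (∫⁻ _, B ∂μ) ≠ ⊤ := by
    rw [lintegral_const]
    apply ENNReal.mul_ne_top ENNReal.ofReal_ne_top
    rw [hμdef, Measure.restrict_apply_univ, Real.volume_Ioc]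
    exact ENNReal.ofReal_ne_top
  have hFatou := limsup_lintegral_le (μ := μ) (f := fun k t => ENNReal.ofReal (G k t))
    (fun _ => B) hmeas (fun k => Eventually.of_forall fun t => ENNReal.ofReal_le_ofReal (hGB k t))
    hfinB
  -- the ε-estimate
  have hεest : ∀ ε : ℝ, 0 < ε → 2*π*‖F z‖ ≤ (2*π + ε*(2*π))*(A+ε) := by
    intro ε hε
    have hae : ∀ᵐ t ∂μ, limsup (fun k => ENNReal.ofReal (G k t)) atTop
        ≤ ENNReal.ofReal ((Q t + ε)*(A+ε)) := by
      filter_upwards [ae_restrict_of_ae hb] with t ht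
      have h1 : ∀ᶠ k in atTop, ‖F (circleMap 0 (r k) t)‖ ≤ A + ε := by
        have := hrt.eventually (ht ε hε)
        simpa [circleMap_zero] using this
      have h2 : Tendsto (fun k => P k t) atTop (𝓝 (Q t)) := by
        rw [hPdef, hQdef]
        simp only
        apply Tendsto.div
        · have := (hrt1.pow 2).sub_const (Complex.normSq z)
          simpa using this
        · apply (Complex.continuous_normSq.tendsto _).comp
          apply Tendsto.sub_const
          have hc1 : Tendsto (fun k => ((r k : ℝ) : ℂ)) atTop (𝓝 (1:ℂ)) :=
            (Complex.continuous_ofReal.tendsto _).comp hrt1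
          have h7 := hc1.mul_const (Complex.exp ((t:ℂ) * I))
          rw [one_mul] at h7
          simp only [circleMap_zero, Complex.ofReal_one, one_mul]
          exact h7
        · exact hQd0 t
      have h3 : ∀ᶠ k in atTop, P k t ≤ Q t + ε :=
        (h2.eventually_lt_const (lt_add_of_pos_right _ hε)).mono fun k hk => hk.le
      have h4 : ∀ᶠ k in atTop, ENNReal.ofReal (G k t) ≤ ENNReal.ofReal ((Q t + ε)*(A+ε)) := by
        filter_upwards [h1, h3] with k hk1 hk3
        apply ENNReal.ofReal_le_ofReal
        exact mul_le_mul hk3 hk1 (norm_nonneg _) (by linarith [hQ0 t])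
      exact limsup_le_of_le (by isBoundedDefault) h4
    have hQint : Integrable (fun t => (Q t + ε)*(A+ε)) μ :=
      ((hQcont.add continuous_const).mul continuous_const).integrableOn_Ioc
    have hQμ : ∫ t, Q t ∂μ = 2*π := by
      have := poisson_one z hz
      rw [integral_of_le Real.two_pi_pos.le] at this
      exact this
    have hRHS : ∫ t, (Q t + ε)*(A+ε) ∂μ = (2*π + ε*(2*π))*(A+ε) := by
      rw [MeasureTheory.integral_mul_const, integral_add (hQcont.integrableOn_Ioc) (integrable_const _), hQμ]
      have hconst : ∫ _t, ε ∂μ = ε*(2*π) := by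
        rw [hμdef, setIntegral_const, Real.volume_real_Ioc_of_le Real.two_pi_pos.le, sub_zero,
          smul_eq_mul]
        ring
      rw [hconst]
    have chain : ENNReal.ofReal (2*π*‖F z‖) ≤ ENNReal.ofReal ((2*π + ε*(2*π))*(A+ε)) := by
      calc ENNReal.ofReal (2*π*‖F z‖)
          ≤ limsup (fun k => ∫⁻ t, ENNReal.ofReal (G k t) ∂μ) atTop :=
            le_limsup_of_frequently_le (Frequently.of_forall key2) (by isBoundedDefault)
        _ ≤ ∫⁻ t, limsup (fun k => ENNReal.ofReal (G k t)) atTop ∂μ := hFatou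
        _ ≤ ∫⁻ t, ENNReal.ofReal ((Q t + ε)*(A+ε)) ∂μ := lintegral_mono_ae hae
        _ = ENNReal.ofReal (∫ t, (Q t + ε)*(A+ε) ∂μ) :=
            (ofReal_integral_eq_lintegral_ofReal hQint
              (Eventually.of_forall fun t =>
                mul_nonneg (by linarith [hQ0 t]) (by linarith))).symm
        _ = ENNReal.ofReal ((2*π + ε*(2*π))*(A+ε)) := by rw [hRHS]
    have := (ENNReal.ofReal_le_ofReal_iff (by positivity)).mp chain
    exact this
  -- conclude
  have hπ := Real.pi_pos
  by_contra hcon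
  push_neg at hcon
  set η : ℝ := ‖F z‖ - A with hηdef
  have hη : 0 < η := by simp only [hηdef]; linarith
  set ε : ℝ := min 1 (η/(2*(A+2))) with hεdef
  have hε : 0 < ε := lt_min one_pos (by positivity)
  have hε1 : ε ≤ 1 := min_le_left _ _
  have hε2 : ε ≤ η/(2*(A+2)) := min_le_right _ _
  have h := hεest ε hε
  have hexp : (2*π + ε*(2*π))*(A+ε) = 2*π*(A + ε*(1+A+ε)) := by ring
  rw [hexp] at h
  have h2 : ‖F z‖ ≤ A + ε*(1+A+ε) := by nlinarith
  have h3 : ε*(1+A+ε) ≤ ε*(A+2) := by nlinarith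
  have h4 : ε*(A+2) ≤ η/2 := by
    rw [le_div_iff₀ (by positivity : (0:ℝ) < 2*(A+2))] at hε2
    nlinarith
  simp only [hηdef] at h2 h3 h4
  linarith

end PoissonAux

/-- Let `h, d ∈ H^∞` with `d ≢ 0` and `φ` inner, such that for every `n`
the inner function `φ^n` divides `h^n d` in `H^∞`. Then `φ` divides `h` in `H^∞`. -/
theorem inner_divides_of_divides_powers (h d φ : ℂ → ℂ)
    (hh : IsHinf h) (hd : IsHinf d)
    (hd0 : ∃ z ∈ ball (0 : ℂ) 1, d z ≠ 0)
    (hφ : IsInnerFn φ)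
    (hdiv : ∀ n : ℕ, ∃ q : ℂ → ℂ, IsHinf q ∧
      ∀ z ∈ ball (0 : ℂ) 1, h z ^ n * d z = φ z ^ n * q z) :
    ∃ q : ℂ → ℂ, IsHinf q ∧ ∀ z ∈ ball (0 : ℂ) 1, h z = φ z * q z := by
  obtain ⟨hhd, Ch, hCh⟩ := hh
  obtain ⟨hdd, Cd, hCd⟩ := hd
  obtain ⟨⟨hφd, hφbd⟩, hφb⟩ := hφ
  set M : ℝ := max Ch 1 with hMdef
  set Cc : ℝ := max Cd 1 with hCcdef
  have hM1 : (1:ℝ) ≤ M := le_max_right _ _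
  have hC1 : (1:ℝ) ≤ Cc := le_max_right _ _
  have hM0 : (0:ℝ) < M := lt_of_lt_of_le one_pos hM1
  have hC0 : (0:ℝ) < Cc := lt_of_lt_of_le one_pos hC1
  have hCh' : ∀ z ∈ ball (0:ℂ) 1, ‖h z‖ ≤ M := fun z hz => le_trans (hCh z hz) (le_max_left _ _)
  have hCd' : ∀ z ∈ ball (0:ℂ) 1, ‖d z‖ ≤ Cc := fun z hz => le_trans (hCd z hz) (le_max_left _ _)
  -- step 1
  have step1 : ∀ n : ℕ, ∀ z ∈ ball (0:ℂ) 1, ‖h z‖^n * ‖d z‖ ≤ ‖φ z‖^n * (M^n * Cc) := by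
    intro n
    obtain ⟨q, ⟨hqd, Cq, hCq⟩, hqe⟩ := hdiv n
    have hA0 : (0:ℝ) ≤ M^n * Cc := le_of_lt (mul_pos (pow_pos hM0 n) hC0)
    have hqb : ∀ z ∈ ball (0:ℂ) 1, ‖q z‖ ≤ M^n * Cc := by
      apply poisson_bound q hqd Cq hCq _ hA0
      filter_upwards [hφb] with θ hθ
      intro ε hε
      -- choose δ
      have hc2 : Tendsto (fun δ : ℝ => (M^n*Cc)/(1-δ)^n) (𝓝 0) (𝓝 ((M^n*Cc)/1)) := by
        apply tendsto_const_nhds.div _ one_ne_zero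
        have hco : Continuous (fun δ : ℝ => (1-δ)^n) :=
          (continuous_const.sub continuous_id).pow n
        have := hco.tendsto (0:ℝ)
        simpa using this
      rw [div_one] at hc2
      have hev := hc2.eventually_lt_const (lt_add_of_pos_right _ hε)
      have hev2 : ∀ᶠ δ : ℝ in 𝓝[>] (0:ℝ),
          ((M^n*Cc)/(1-δ)^n < M^n*Cc + ε ∧ δ < 1) ∧ 0 < δ := by
        refine Eventually.and ?_ self_mem_nhdsWithin
        refine Eventually.filter_mono nhdsWithin_le_nhds ?_
        exact hev.and (gt_mem_nhds (by norm_num : (0:ℝ) < 1))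
      obtain ⟨δ, ⟨hδb, hδ1⟩, hδ0⟩ := hev2.exists
      have h1 : ∀ᶠ r : ℝ in 𝓝[<] (1:ℝ), 1 - δ < ‖φ (↑r * Complex.exp (↑θ * I))‖ :=
        hθ.eventually_const_lt (by linarith)
      have h2 : ∀ᶠ r : ℝ in 𝓝[<] (1:ℝ), r ∈ Ioo (0:ℝ) 1 :=
        Ioo_mem_nhdsLT_of_mem (by constructor <;> norm_num)
      filter_upwards [h1, h2] with r hr1 hr2
      set w : ℂ := ↑r * Complex.exp (↑θ * I) with hwdef
      have hwb : w ∈ ball (0:ℂ) 1 := by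
        rw [mem_ball_zero_iff, hwdef, norm_mul, Complex.norm_real, Complex.norm_exp_ofReal_mul_I,
          mul_one, Real.norm_eq_abs, abs_of_pos hr2.1]
        exact hr2.2
      have hφpos : 0 < ‖φ w‖ := lt_of_le_of_lt (by linarith) hr1
      have hφw0 : φ w ≠ 0 := norm_pos_iff.mp hφpos
      have hqval : q w = (h w^n * d w)/(φ w^n) := by
        rw [eq_div_iff (pow_ne_zero n hφw0)]
        rw [hqe w hwb]; ring
      rw [hqval, norm_div, norm_mul, norm_pow, norm_pow]
      have hb1 : ‖h w‖^n * ‖d w‖ ≤ M^n * Cc :=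
        mul_le_mul (pow_le_pow_left₀ (norm_nonneg _) (hCh' w hwb) n) (hCd' w hwb)
          (norm_nonneg _) (by positivity)
      have hb2 : (1-δ)^n ≤ ‖φ w‖^n := pow_le_pow_left₀ (by linarith) hr1.le n
      calc ‖h w‖^n * ‖d w‖ / ‖φ w‖^n ≤ (M^n*Cc)/(1-δ)^n :=
            div_le_div₀ hA0 hb1 (pow_pos (by linarith) n) hb2
        _ ≤ M^n*Cc + ε := hδb.le
    intro z hz
    calc ‖h z‖^n * ‖d z‖ = ‖h z^n * d z‖ := by rw [norm_mul, norm_pow]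
      _ = ‖φ z^n * q z‖ := by rw [hqe z hz]
      _ = ‖φ z‖^n * ‖q z‖ := by rw [norm_mul, norm_pow]
      _ ≤ ‖φ z‖^n * (M^n*Cc) := mul_le_mul_of_nonneg_left (hqb z hz) (by positivity)
  -- step 2 : pointwise where d ≠ 0
  have step2 : ∀ z ∈ ball (0:ℂ) 1, d z ≠ 0 → ‖h z‖ ≤ M * ‖φ z‖ := by
    intro z hz hdz
    by_contra hcon
    push_neg at hcon
    have hd0' : 0 < ‖d z‖ := norm_pos_iff.mpr hdz
    rcases eq_or_ne (φ z) 0 with hφz | hφz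
    · have h1 := step1 1 z hz
      rw [hφz] at h1
      simp only [norm_zero, pow_one] at h1
      rw [hφz, norm_zero, mul_zero] at hcon
      nlinarith
    · have hφpos : 0 < ‖φ z‖ := norm_pos_iff.mpr hφz
      have hα : 1 < ‖h z‖/(M * ‖φ z‖) := (one_lt_div (by positivity)).mpr hcon
      obtain ⟨n, hn⟩ := pow_unbounded_of_one_lt (Cc/‖d z‖) hα
      have h1 := step1 n z hz
      have h2 : (‖h z‖/(M * ‖φ z‖))^n ≤ Cc/‖d z‖ := by
        rw [div_pow, div_le_div_iff₀ (by positivity) hd0']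
        nlinarith [h1, mul_pow M ‖φ z‖ n]
      linarith
  -- analyticity
  have hφanal : AnalyticOnNhd ℂ φ (ball (0:ℂ) 1) := hφd.analyticOnNhd isOpen_ball
  have hdanal : AnalyticOnNhd ℂ d (ball (0:ℂ) 1) := hdd.analyticOnNhd isOpen_ball
  -- step 2' : everywhere
  have step2' : ∀ z ∈ ball (0:ℂ) 1, ‖h z‖ ≤ M * ‖φ z‖ := by
    intro z hz
    rcases eq_or_ne (d z) 0 with hdz | hdz
    · obtain ⟨z0, hz00, hdz0⟩ := hd0
      have hne : ∀ᶠ w in 𝓝[≠] z, d w ≠ 0 := by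
        rcases (hdanal z hz).eventually_eq_zero_or_eventually_ne_zero with hcase | hcase
        · exact absurd ((hdanal.eqOn_zero_of_preconnected_of_eventuallyEq_zero
            (convex_ball (0:ℂ) 1).isPreconnected hz hcase) hz00) hdz0
        · exact hcase
      have hball : ∀ᶠ w in 𝓝[≠] z, w ∈ ball (0:ℂ) 1 :=
        eventually_nhdsWithin_of_eventually_nhds (isOpen_ball.mem_nhds hz)
      have hev : ∀ᶠ w in 𝓝[≠] z, ‖h w‖ ≤ M * ‖φ w‖ := by
        filter_upwards [hne, hball] with w h1 h2
        exact step2 w h2 h1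
      have hth : Tendsto (fun w => ‖h w‖) (𝓝[≠] z) (𝓝 ‖h z‖) :=
        ((hhd.differentiableAt (isOpen_ball.mem_nhds hz)).continuousAt.norm.tendsto).mono_left
          nhdsWithin_le_nhds
      have hcφ : ContinuousAt (fun w => M * ‖φ w‖) z :=
        continuousAt_const.mul (hφd.differentiableAt (isOpen_ball.mem_nhds hz)).continuousAt.norm
      have htφ : Tendsto (fun w => M * ‖φ w‖) (𝓝[≠] z) (𝓝 (M * ‖φ z‖)) :=
        hcφ.tendsto.mono_left nhdsWithin_le_nhds
      exact le_of_tendsto_of_tendsto hth htφ hev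
    · exact step2 z hz hdz
  -- φ is not identically zero
  have hφex : ∃ w ∈ ball (0:ℂ) 1, φ w ≠ 0 := by
    by_contra hall
    push_neg at hall
    obtain ⟨θ, hθ⟩ := hφb.exists
    have h2 : ∀ᶠ r : ℝ in 𝓝[<] (1:ℝ), r ∈ Ioo (0:ℝ) 1 :=
      Ioo_mem_nhdsLT_of_mem (by constructor <;> norm_num)
    have hz : Tendsto (fun _ : ℝ => (0:ℝ)) (𝓝[<] (1:ℝ)) (𝓝 1) := by
      apply hθ.congr'
      filter_upwards [h2] with r hr
      have hwb : (↑r * Complex.exp (↑θ * I)) ∈ ball (0:ℂ) 1 := by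
        rw [mem_ball_zero_iff, norm_mul, Complex.norm_real, Complex.norm_exp_ofReal_mul_I,
          mul_one, Real.norm_eq_abs, abs_of_pos hr.1]
        exact hr.2
      rw [hall _ hwb, norm_zero]
    have h01 := tendsto_nhds_unique hz tendsto_const_nhds
    norm_num at h01
  -- eventually nonzero near any point
  have hφne : ∀ z ∈ ball (0:ℂ) 1, ∀ᶠ w in 𝓝[≠] z, φ w ≠ 0 := by
    intro z hz
    rcases (hφanal z hz).eventually_eq_zero_or_eventually_ne_zero with hcase | hcase
    · obtain ⟨w0, hw0b, hw00⟩ := hφex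
      exact absurd ((hφanal.eqOn_zero_of_preconnected_of_eventuallyEq_zero
        (convex_ball (0:ℂ) 1).isPreconnected hz hcase) hw0b) hw00
    · exact hcase
  -- the quotient
  set L : ℂ → ℂ := fun w => h w / φ w with hLdef
  set q : ℂ → ℂ := fun w => if φ w = 0 then limUnder (𝓝[≠] w) L else L w with hqdef
  have hLdiff : ∀ w ∈ ball (0:ℂ) 1, φ w ≠ 0 → DifferentiableAt ℂ L w := fun w hw hw0 =>
    (hhd.differentiableAt (isOpen_ball.mem_nhds hw)).div
      (hφd.differentiableAt (isOpen_ball.mem_nhds hw)) hw0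
  have hLbound : ∀ w ∈ ball (0:ℂ) 1, φ w ≠ 0 → ‖L w‖ ≤ M := by
    intro w hw hw0
    rw [hLdef]
    simp only [norm_div]
    rw [div_le_iff₀ (norm_pos_iff.mpr hw0)]
    exact step2' w hw
  -- package at zeros of φ
  have hzero : ∀ z ∈ ball (0:ℂ) 1, φ z = 0 →
      DifferentiableAt ℂ q z ∧ Tendsto L (𝓝[≠] z) (𝓝 (q z)) := by
    intro z hz hφz
    have hne := hφne z hz
    have hball : ∀ᶠ w in 𝓝[≠] z, w ∈ ball (0:ℂ) 1 :=
      eventually_nhdsWithin_of_eventually_nhds (isOpen_ball.mem_nhds hz)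
    obtain ⟨U, hU, hUsub⟩ : ∃ U ∈ 𝓝 z, ∀ w ∈ U \ {z}, φ w ≠ 0 ∧ w ∈ ball (0:ℂ) 1 := by
      have hcomb := hne.and hball
      rw [eventually_nhdsWithin_iff] at hcomb
      obtain ⟨U, hU1, hU2⟩ := Filter.eventually_iff_exists_mem.mp hcomb
      exact ⟨U, hU1, fun w hw => hU2 w hw.1 hw.2⟩
    have hdiffU : DifferentiableOn ℂ L (U \ {z}) := fun w hw =>
      (hLdiff w (hUsub w hw).2 (hUsub w hw).1).differentiableWithinAt
    have hbddU : BddAbove (norm ∘ L '' (U \ {z})) := by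
      refine ⟨M, ?_⟩
      rintro x ⟨w, hw, rfl⟩
      exact hLbound w (hUsub w hw).2 (hUsub w hw).1
    have hupd := Complex.differentiableOn_update_limUnder_of_bddAbove hU hdiffU hbddU
    have hagree : Set.EqOn q (Function.update L z (limUnder (𝓝[≠] z) L)) U := by
      intro w hw
      rcases eq_or_ne w z with rfl | hwz
      · rw [Function.update_self, hqdef]
        simp only
        rw [if_pos hφz]
      · rw [Function.update_of_ne hwz, hqdef]
        simp only
        rw [if_neg (hUsub w ⟨hw, hwz⟩).1]
    have hdiffAt : DifferentiableAt ℂ (Function.update L z (limUnder (𝓝[≠] z) L)) z :=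
      hupd.differentiableAt hU
    have hqev : q =ᶠ[𝓝 z] Function.update L z (limUnder (𝓝[≠] z) L) :=
      eventually_of_mem hU (fun w hw => hagree hw)
    constructor
    · exact hdiffAt.congr_of_eventuallyEq hqev
    · have hqz : q z = limUnder (𝓝[≠] z) L := by
        rw [hqdef]; simp only; rw [if_pos hφz]
      rw [hqz]
      have hcont : Tendsto (Function.update L z (limUnder (𝓝[≠] z) L)) (𝓝[≠] z)
          (𝓝 (limUnder (𝓝[≠] z) L)) := by
        have := hdiffAt.continuousAt.tendsto.mono_left (nhdsWithin_le_nhds (s := {z}ᶜ))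
        rwa [Function.update_self] at this
      apply hcont.congr'
      filter_upwards [self_mem_nhdsWithin] with w hw
      exact (Function.update_of_ne hw _ _).symm ▸ rfl
  refine ⟨q, ⟨?_, M, ?_⟩, ?_⟩
  · -- differentiability
    intro z hz
    rcases eq_or_ne (φ z) 0 with hφz | hφz
    · exact (hzero z hz hφz).1.differentiableWithinAt
    · have hev : ∀ᶠ w in 𝓝 z, q w = L w := by
        filter_upwards [(hφd.differentiableAt
          (isOpen_ball.mem_nhds hz)).continuousAt.eventually_ne hφz] with w hw
        rw [hqdef]; simp only; rw [if_neg hw]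
      exact ((hLdiff z hz hφz).congr_of_eventuallyEq hev).differentiableWithinAt
  · -- bound
    intro z hz
    rcases eq_or_ne (φ z) 0 with hφz | hφz
    · obtain ⟨-, hlim⟩ := hzero z hz hφz
      have hball : ∀ᶠ w in 𝓝[≠] z, w ∈ ball (0:ℂ) 1 :=
        eventually_nhdsWithin_of_eventually_nhds (isOpen_ball.mem_nhds hz)
      have hev : ∀ᶠ w in 𝓝[≠] z, ‖L w‖ ≤ M := by
        filter_upwards [hφne z hz, hball] with w h1 h2
        exact hLbound w h2 h1
      exact le_of_tendsto hlim.norm hev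
    · have hq : q z = L z := by rw [hqdef]; simp only; rw [if_neg hφz]
      rw [hq]
      exact hLbound z hz hφz
  · -- identity
    intro z hz
    rcases eq_or_ne (φ z) 0 with hφz | hφz
    · have h0 : ‖h z‖ ≤ 0 := by
        have := step2' z hz
        rw [hφz, norm_zero, mul_zero] at this
        exact this
      have : h z = 0 := norm_le_zero_iff.mp h0
      rw [this, hφz, zero_mul]
    · have hq : q z = L z := by rw [hqdef]; simp only; rw [if_neg hφz]
      rw [hq, hLdef]
      simp only
      rw [mul_div_cancel₀ _ hφz]
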